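/- Let Γ be a connected finite simplicial graph, A_Γ the associated right-angled Artin group, and [v] a maximal equivalence class. Suppose α, β ∈ Aut(A_Γ) each map A_{J_[v]} onto A_{J_[v]}, and suppose β(x) = g·α(x)·g⁻¹ for some fixed g ∈ A_Γ and all x ∈ A_Γ. Then there exists h ∈ A_{J_[v]} such that β(x) = h·α(x)·h⁻¹ for all x ∈ A_{J_[v]}. (Hence the restriction to A_{J_[v]} of a representative as in the restriction homomorphism is well defined up to an inner automorphism of A_{J_[v]}.) -/

import Mathlib

open SimpleGraph

namespace RaagPaper

variable {V : Type*}

/-- The link of a vertex: the set of vertices adjacent to it. -/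
def lk (G : SimpleGraph V) (v : V) : Set V := G.neighborSet v

/-- The (closed) star of a vertex: `st(v) = lk(v) ∪ {v}`. -/
def st (G : SimpleGraph V) (v : V) : Set V := insert v (G.neighborSet v)

/-- The preorder on vertices: `v ≤ w` iff `lk(v) ⊆ st(w)`. -/
def vle (G : SimpleGraph V) (v w : V) : Prop := lk G v ⊆ st G w

/-- Equivalence of vertices: `v ∼ w` iff `v ≤ w` and `w ≤ v`. -/
def vequiv (G : SimpleGraph V) (v w : V) : Prop := vle G v w ∧ vle G w v

/-- The equivalence class `[v]` of a vertex `v`. -/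
def cls (G : SimpleGraph V) (v : V) : Set V := {u | vequiv G u v}

/-- `[v]` is maximal with respect to the partial order induced by `≤`. -/
def IsMaximalClass (G : SimpleGraph V) (v : V) : Prop := ∀ w, vle G v w → vle G w v

/-- `L_[v] = lk(v) \ [v]`. -/
def Lset (G : SimpleGraph V) (v : V) : Set V := lk G v \ cls G v

/-- `J_[v] = [v] ∪ L_[v]`, the join associated to `[v]`. -/
def Jset (G : SimpleGraph V) (v : V) : Set V := cls G v ∪ Lset G v

/-- `v ∈ V_ab` : any two distinct vertices of `[v]` are adjacent (so `A_[v]` is abelian). -/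
def Vab (G : SimpleGraph V) (v : V) : Prop :=
  ∀ x ∈ cls G v, ∀ y ∈ cls G v, x ≠ y → G.Adj x y

/-- The commutator relations defining the right-angled Artin group of `G`. -/
def raagRels (G : SimpleGraph V) : Set (FreeGroup V) :=
  {r | ∃ u w : V, G.Adj u w ∧
    r = FreeGroup.of u * FreeGroup.of w * (FreeGroup.of u)⁻¹ * (FreeGroup.of w)⁻¹}

/-- The right-angled Artin group `A_Γ`. -/
abbrev Raag (G : SimpleGraph V) : Type _ := PresentedGroup (raagRels G)

/-- The generator of `A_Γ` corresponding to a vertex. -/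
def gen (G : SimpleGraph V) (v : V) : Raag G := PresentedGroup.of v

/-- The special subgroup `A_Θ` generated by a set `Θ` of vertices. -/
def Asub (G : SimpleGraph V) (Θ : Set V) : Subgroup (Raag G) :=
  Subgroup.closure (gen G '' Θ)

/-- The subgroup of inner automorphisms of a group. -/
def Inn (A : Type*) [Group A] : Subgroup (MulAut A) := (MulAut.conj : A →* MulAut A).range

instance (A : Type*) [Group A] : (Inn A).Normal := by
  constructor
  intro n hn φ
  obtain ⟨g, rfl⟩ := hn
  exact ⟨φ g, by ext x; simp [Inn, MulAut.conj]⟩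

/-- The outer automorphism group `Out(A) = Aut(A)/Inn(A)`. -/
abbrev OutG (A : Type*) [Group A] : Type _ := MulAut A ⧸ Inn A

/-- The canonical projection `Aut(A) → Out(A)`. -/
def outMk (A : Type*) [Group A] : MulAut A →* OutG A := QuotientGroup.mk' (Inn A)

/-- if `α, β ∈ Aut(A_Γ)` both map `A_{J_[v]}` onto itself ( `[v]` maximal ) and
`β = conj(g) ∘ α` for some `g ∈ A_Γ`, then on `A_{J_[v]}` the automorphisms `α` and `β` differ
by conjugation by an element `h ∈ A_{J_[v]}`. -/
lemma gen_comm (G : SimpleGraph V) {u w : V} (h : G.Adj u w) :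
    gen G u * gen G w * (gen G u)⁻¹ * (gen G w)⁻¹ = 1 := by
  have hr : (FreeGroup.of u * FreeGroup.of w * (FreeGroup.of u)⁻¹ * (FreeGroup.of w)⁻¹ : FreeGroup V)
      ∈ Subgroup.normalClosure (raagRels G) :=
    Subgroup.subset_normalClosure ⟨u, w, h, rfl⟩
  have := (QuotientGroup.eq_one_iff (N := Subgroup.normalClosure (raagRels G)) _).mpr hr
  exact this

open Classical in
noncomputable def retr (G : SimpleGraph V) (Θ : Set V) : Raag G →* Raag G :=
  PresentedGroup.toGroup (f := fun u => if u ∈ Θ then gen G u else 1) (by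
    rintro r ⟨u, w, hadj, rfl⟩
    classical
    simp only [map_mul, map_inv, FreeGroup.lift_apply_of]
    by_cases hu : u ∈ Θ <;> by_cases hw : w ∈ Θ <;> simp [hu, hw]
    · exact gen_comm G hadj)

lemma retr_fix (G : SimpleGraph V) (Θ : Set V) {x : Raag G} (hx : x ∈ Asub G Θ) :
    retr G Θ x = x := by
  induction hx using Subgroup.closure_induction with
  | mem y hy =>
      obtain ⟨u, hu, rfl⟩ := hy
      simp [retr, gen, PresentedGroup.toGroup.of, hu]
  | one => simp
  | mul a b _ _ ha hb => simp [map_mul, ha, hb]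
  | inv a _ ha => simp [map_inv, ha]

lemma retr_mem (G : SimpleGraph V) (Θ : Set V) (x : Raag G) :
    retr G Θ x ∈ Asub G Θ := by
  have hx : x ∈ (⊤ : Subgroup (Raag G)) := trivial
  rw [← PresentedGroup.closure_range_of (raagRels G)] at hx
  induction hx using Subgroup.closure_induction with
  | mem y hy =>
      obtain ⟨u, rfl⟩ := hy
      by_cases hu : u ∈ Θ
      · have : retr G Θ (PresentedGroup.of u) = gen G u := by
          simp [retr, PresentedGroup.toGroup.of, hu]
        rw [this]
        exact Subgroup.subset_closure ⟨u, hu, rfl⟩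
      · have : retr G Θ (PresentedGroup.of u) = 1 := by
          simp [retr, PresentedGroup.toGroup.of, hu]
        rw [this]; exact one_mem _
  | one => simp
  | mul a b _ _ ha hb => rw [map_mul]; exact mul_mem ha hb
  | inv a _ ha => rw [map_inv]; exact inv_mem ha


theorem restriction_well_defined_up_to_inner {V : Type*} [Fintype V] [Nonempty V]
    (G : SimpleGraph V) (hconn : G.Connected) (v : V) (hv : IsMaximalClass G v)
    (α β : MulAut (Raag G)) (g : Raag G)
    (hα : (Asub G (Jset G v)).map α.toMonoidHom = Asub G (Jset G v))
    (hβ : (Asub G (Jset G v)).map β.toMonoidHom = Asub G (Jset G v))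
    (hg : ∀ x : Raag G, β x = g * α x * g⁻¹) :
    ∃ h ∈ Asub G (Jset G v), ∀ x ∈ Asub G (Jset G v), β x = h * α x * h⁻¹ := by
  refine ⟨retr G (Jset G v) g, retr_mem G (Jset G v) g, ?_⟩
  intro x hx
  have hαx : α x ∈ Asub G (Jset G v) := by
    rw [← hα]; exact ⟨x, hx, rfl⟩
  have hβx : β x ∈ Asub G (Jset G v) := by
    rw [← hβ]; exact ⟨x, hx, rfl⟩
  have h1 : retr G (Jset G v) (β x) = β x := retr_fix G (Jset G v) hβx
  rw [hg x] at h1 ⊢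
  rw [map_mul, map_mul, map_inv, retr_fix G (Jset G v) hαx] at h1
  exact h1.symm


end RaagPaper
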